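/- Let d and d' be strict negative type metrics on [N], and for a strict negative type metric e define γ(e) = -max{x^T e x : ‖x‖₂ = 1, 1^T x = 0} > 0. Let p*(d), p*(d') be the maximizers of the quadratic form over the probability simplex. Then ‖p*(d') - p*(d)‖₂ ≤ (2 / max{γ(d), γ(d')}) · ‖d' - d‖_op, where ‖·‖_op is the operator norm. -/

import Mathlib

open Matrix BigOperators

namespace Stmt6Aux

noncomputable def en {N : ℕ} (u : Fin N → ℝ) : ℝ := Real.sqrt (∑ i, u i ^ 2)

lemma en_nonneg {N : ℕ} (u : Fin N → ℝ) : 0 ≤ en u := Real.sqrt_nonneg _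

lemma sq_en {N : ℕ} (u : Fin N → ℝ) : en u ^ 2 = ∑ i, u i ^ 2 := Real.sq_sqrt (by positivity)

lemma en_pos {N : ℕ} {u : Fin N → ℝ} (hu : u ≠ 0) : 0 < en u := by
  have h1 : ∃ i, u i ≠ 0 := by
    by_contra h; push_neg at h; exact hu (funext h)
  obtain ⟨i, hi⟩ := h1
  exact Real.sqrt_pos.2 <| Finset.sum_pos' (fun j _ => sq_nonneg _)
    ⟨i, Finset.mem_univ i, by positivity⟩

lemma en_neg {N : ℕ} (u : Fin N → ℝ) : en (-u) = en u := by simp [en]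

lemma en_smul {N : ℕ} {c : ℝ} (hc : 0 ≤ c) (u : Fin N → ℝ) : en (c • u) = c * en u := by
  simp only [en, Pi.smul_apply, smul_eq_mul, mul_pow, ← Finset.mul_sum]
  rw [Real.sqrt_mul (by positivity), Real.sqrt_sq hc]

lemma dot_le_en {N : ℕ} (u v : Fin N → ℝ) : u ⬝ᵥ v ≤ en u * en v :=
  Real.sum_mul_le_sqrt_mul_sqrt _ _ _

lemma dot_symm {N : ℕ} {e : Matrix (Fin N) (Fin N) ℝ} (he : e.IsSymm) (x y : Fin N → ℝ) :
    x ⬝ᵥ e.mulVec y = y ⬝ᵥ e.mulVec x := by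
  simp only [dotProduct, mulVec, Finset.mul_sum]
  rw [Finset.sum_comm]
  refine Finset.sum_congr rfl fun i _ => Finset.sum_congr rfl fun j _ => ?_
  rw [← he.apply i j]; ring

lemma expand {N : ℕ} {e : Matrix (Fin N) (Fin N) ℝ} (he : e.IsSymm) (x w : Fin N → ℝ) :
    (x + w) ⬝ᵥ e.mulVec (x + w)
      = x ⬝ᵥ e.mulVec x + 2 * (w ⬝ᵥ e.mulVec x) + w ⬝ᵥ e.mulVec w := by
  rw [mulVec_add, dotProduct_add, add_dotProduct, add_dotProduct, dot_symm he x w]; ring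

lemma nonpos_of_le_mul {A c : ℝ} (hc : 0 ≤ c) (h : ∀ t : ℝ, 0 < t → t ≤ 1 → A ≤ t * c) :
    A ≤ 0 := by
  rcases eq_or_lt_of_le hc with h0 | h0
  · simpa [← h0] using h 1 one_pos le_rfl
  · by_contra hA
    push_neg at hA
    have ht : (0:ℝ) < min 1 (A / (2 * c)) := lt_min one_pos (by positivity)
    have hle := h _ ht (min_le_left _ _)
    have h2 : min 1 (A / (2 * c)) * c ≤ (A / (2 * c)) * c :=
      mul_le_mul_of_nonneg_right (min_le_right _ _) hc
    have h3 : (A / (2 * c)) * c = A / 2 := by field_simp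
    linarith

lemma quad_continuous {N : ℕ} (e : Matrix (Fin N) (Fin N) ℝ) :
    Continuous (fun x : Fin N → ℝ => x ⬝ᵥ e.mulVec x) := by
  simp only [dotProduct, mulVec]
  exact continuous_finset_sum _ fun i _ =>
    (continuous_apply i).mul (continuous_finset_sum _ fun j _ =>
      continuous_const.mul (continuous_apply j))

lemma gamma_facts {N : ℕ} (hN : 2 ≤ N) (e : Matrix (Fin N) (Fin N) ℝ)
    (hSNT : ∀ x : Fin N → ℝ, x ≠ 0 → ∑ i, x i = 0 → x ⬝ᵥ e.mulVec x < 0) :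
    sSup {v : ℝ | ∃ x : Fin N → ℝ,
        ∑ i, (x i) ^ 2 = 1 ∧ ∑ i, x i = 0 ∧ v = x ⬝ᵥ e.mulVec x} < 0 ∧
      ∀ u : Fin N → ℝ, ∑ i, u i = 0 →
        u ⬝ᵥ e.mulVec u ≤ sSup {v : ℝ | ∃ x : Fin N → ℝ,
          ∑ i, (x i) ^ 2 = 1 ∧ ∑ i, x i = 0 ∧ v = x ⬝ᵥ e.mulVec x} * ∑ i, (u i) ^ 2 := by
  set S : Set ℝ := {v : ℝ | ∃ x : Fin N → ℝ,
    ∑ i, (x i) ^ 2 = 1 ∧ ∑ i, x i = 0 ∧ v = x ⬝ᵥ e.mulVec x} with hS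
  set K : Set (Fin N → ℝ) := {x | ∑ i, (x i) ^ 2 = 1 ∧ ∑ i, x i = 0} with hK
  have hclosed : IsClosed K := by
    have h1 : IsClosed {x : Fin N → ℝ | ∑ i, (x i) ^ 2 = 1} :=
      isClosed_eq (continuous_finset_sum _ fun i _ => (continuous_apply i).pow 2)
        continuous_const
    have h2 : IsClosed {x : Fin N → ℝ | ∑ i, x i = 0} :=
      isClosed_eq (continuous_finset_sum _ fun i _ => continuous_apply i) continuous_const
    exact h1.inter h2
  have hbdd : Bornology.IsBounded K := by
    apply Bornology.IsBounded.subset (Metric.isBounded_closedBall (x := (0 : Fin N → ℝ)) (r := 1))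
    rintro x ⟨hx1, -⟩
    rw [Metric.mem_closedBall, dist_zero_right]
    rw [pi_norm_le_iff_of_nonneg zero_le_one]
    intro i
    rw [Real.norm_eq_abs, ← Real.sqrt_sq_eq_abs, ← Real.sqrt_one]
    apply Real.sqrt_le_sqrt
    rw [← hx1]
    exact Finset.single_le_sum (fun j _ => sq_nonneg (x j)) (Finset.mem_univ i)
  have hKc : IsCompact K := Metric.isCompact_of_isClosed_isBounded hclosed hbdd
  have hne : K.Nonempty := by
    set i0 : Fin N := ⟨0, by omega⟩
    set i1 : Fin N := ⟨1, by omega⟩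
    have h01 : i0 ≠ i1 := by simp [i0, i1, Fin.ext_iff]
    set s : ℝ := Real.sqrt (1/2) with hs
    have hs2 : s ^ 2 = 1/2 := Real.sq_sqrt (by norm_num)
    refine ⟨fun i => if i = i0 then s else if i = i1 then -s else 0, ?_, ?_⟩
    · have : ∀ i, (if i = i0 then s else if i = i1 then -s else 0) ^ 2
          = (if i = i0 then s ^ 2 else 0) + (if i = i1 then s ^ 2 else 0) := by
        intro i
        by_cases h0 : i = i0
        · subst h0; simp [h01]
        · by_cases h1 : i = i1 <;> simp [h0, h1, Ne.symm h01]
      simp only [this, Finset.sum_add_distrib, Finset.sum_ite_eq', Finset.mem_univ, if_true]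
      rw [hs2]; norm_num
    · have : ∀ i, (if i = i0 then s else if i = i1 then -s else 0)
          = (if i = i0 then s else 0) + (if i = i1 then -s else 0) := by
        intro i
        by_cases h0 : i = i0
        · subst h0; simp [h01]
        · by_cases h1 : i = i1 <;> simp [h0, h1, Ne.symm h01]
      simp only [this, Finset.sum_add_distrib, Finset.sum_ite_eq', Finset.mem_univ, if_true]
      ring
  obtain ⟨x₀, hx₀K, hmax⟩ := hKc.exists_isMaxOn hne (quad_continuous e).continuousOn
  have hSg : IsGreatest S (x₀ ⬝ᵥ e.mulVec x₀) := by
    constructor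
    · exact ⟨x₀, hx₀K.1, hx₀K.2, rfl⟩
    · rintro v ⟨x, h1, h2, rfl⟩
      exact hmax (⟨h1, h2⟩ : x ∈ K)
  have hsup : sSup S = x₀ ⬝ᵥ e.mulVec x₀ := hSg.csSup_eq
  have hx₀ne : x₀ ≠ 0 := by
    intro h
    have := hx₀K.1
    rw [h] at this
    simp at this
  constructor
  · rw [hsup]; exact hSNT x₀ hx₀ne hx₀K.2
  · intro u hu
    by_cases hu0 : u = 0
    · simp [hu0]
    · set t : ℝ := ∑ i, (u i) ^ 2 with ht
      have htpos : 0 < t := by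
        have h1 : ∃ i, u i ≠ 0 := by
          by_contra h; push_neg at h; exact hu0 (funext h)
        obtain ⟨i, hi⟩ := h1
        exact Finset.sum_pos' (fun j _ => sq_nonneg _) ⟨i, Finset.mem_univ i, by positivity⟩
      set c : ℝ := Real.sqrt t with hc
      have hcpos : 0 < c := Real.sqrt_pos.2 htpos
      have hc2 : c ^ 2 = t := Real.sq_sqrt htpos.le
      have hymem : (c⁻¹ • u) ⬝ᵥ e.mulVec (c⁻¹ • u) ∈ S := by
        refine ⟨c⁻¹ • u, ?_, ?_, rfl⟩
        · simp only [Pi.smul_apply, smul_eq_mul, mul_pow, ← Finset.mul_sum, ← ht]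
          rw [← hc2]
          field_simp
        · simp only [Pi.smul_apply, smul_eq_mul, ← Finset.mul_sum, hu, mul_zero]
      have hy : (c⁻¹ • u) ⬝ᵥ e.mulVec (c⁻¹ • u) ≤ sSup S := le_csSup hSg.bddAbove hymem
      have hquad : (c⁻¹ • u) ⬝ᵥ e.mulVec (c⁻¹ • u) = c⁻¹ * (c⁻¹ * (u ⬝ᵥ e.mulVec u)) := by
        rw [mulVec_smul, smul_dotProduct, dotProduct_smul]
        simp [smul_eq_mul]
      rw [hquad] at hy
      have h2 := mul_le_mul_of_nonneg_left hy (le_of_lt (by positivity : (0:ℝ) < c ^ 2))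
      have h3 : c ^ 2 * (c⁻¹ * (c⁻¹ * (u ⬝ᵥ e.mulVec u))) = u ⬝ᵥ e.mulVec u := by
        field_simp
      rw [h3] at h2
      calc u ⬝ᵥ e.mulVec u ≤ c ^ 2 * sSup S := h2
        _ = sSup S * t := by rw [hc2]; ring

lemma op_facts {N : ℕ} (hN : 2 ≤ N) (E : Matrix (Fin N) (Fin N) ℝ) :
    0 ≤ sSup {v : ℝ | ∃ x : Fin N → ℝ, ∑ i, (x i) ^ 2 = 1 ∧
        v = Real.sqrt (∑ i, (E.mulVec x i) ^ 2)} ∧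
      ∀ x : Fin N → ℝ, en (E.mulVec x) ≤ sSup {v : ℝ | ∃ x : Fin N → ℝ, ∑ i, (x i) ^ 2 = 1 ∧
        v = Real.sqrt (∑ i, (E.mulVec x i) ^ 2)} * en x := by
  set S : Set ℝ := {v : ℝ | ∃ x : Fin N → ℝ, ∑ i, (x i) ^ 2 = 1 ∧
    v = Real.sqrt (∑ i, (E.mulVec x i) ^ 2)} with hS
  have hbdd : BddAbove S := by
    refine ⟨Real.sqrt (∑ i, ∑ j, E i j ^ 2), ?_⟩
    rintro v ⟨x, hx1, rfl⟩
    apply Real.sqrt_le_sqrt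
    apply Finset.sum_le_sum
    intro i _
    calc (E.mulVec x i) ^ 2 = (∑ j, E i j * x j) ^ 2 := by rfl
      _ ≤ (∑ j, E i j ^ 2) * ∑ j, (x j) ^ 2 := Finset.sum_mul_sq_le_sq_mul_sq _ _ _
      _ = ∑ j, E i j ^ 2 := by rw [hx1, mul_one]
  have hmem_unit : ∀ y : Fin N → ℝ, ∑ i, (y i) ^ 2 = 1 → en (E.mulVec y) ≤ sSup S := by
    intro y hy
    exact le_csSup hbdd ⟨y, hy, rfl⟩
  have hunit : ∃ y : Fin N → ℝ, ∑ i, (y i) ^ 2 = 1 := by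
    refine ⟨Pi.single ⟨0, by omega⟩ 1, ?_⟩
    simp [Pi.single_apply, sq, ite_mul, Finset.sum_ite_eq']
  obtain ⟨y₀, hy₀⟩ := hunit
  have hnn : 0 ≤ sSup S := le_trans (en_nonneg _) (hmem_unit y₀ hy₀)
  refine ⟨hnn, fun x => ?_⟩
  by_cases hx : x = 0
  · simp [hx, en, mulVec_zero]
  · set c : ℝ := en x with hc
    have hcpos : 0 < c := en_pos hx
    have hy1 : ∑ i, ((c⁻¹ • x) i) ^ 2 = 1 := by
      simp only [Pi.smul_apply, smul_eq_mul, mul_pow, ← Finset.mul_sum]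
      have : ∑ i, x i ^ 2 = c ^ 2 := (sq_en x).symm
      rw [this]
      field_simp
    have hEx : E.mulVec x = c • E.mulVec (c⁻¹ • x) := by
      rw [mulVec_smul, smul_smul]
      field_simp
      rw [one_smul]
    rw [hEx, en_smul hcpos.le]
    have := hmem_unit _ hy1
    calc c * en (E.mulVec (c⁻¹ • x)) ≤ c * sSup S :=
          mul_le_mul_of_nonneg_left this hcpos.le
      _ = sSup S * c := mul_comm _ _

lemma en_simplex {N : ℕ} {p : Fin N → ℝ} (hp : p ∈ stdSimplex ℝ (Fin N)) : en p ≤ 1 := by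
  rw [en, ← Real.sqrt_one]
  apply Real.sqrt_le_sqrt
  calc ∑ i, p i ^ 2 ≤ ∑ i, p i := by
        apply Finset.sum_le_sum
        intro i _
        have h0 : 0 ≤ p i := hp.1 i
        have h1 : p i ≤ 1 := by
          rw [← hp.2]
          exact Finset.single_le_sum (fun j _ => hp.1 j) (Finset.mem_univ i)
        nlinarith
    _ = 1 := hp.2

lemma master {N : ℕ} (a b : Matrix (Fin N) (Fin N) ℝ)
    (ha : a.IsSymm) (hb : b.IsSymm)
    (hSNTb : ∀ x : Fin N → ℝ, x ≠ 0 → ∑ i, x i = 0 → x ⬝ᵥ b.mulVec x < 0)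
    (pa pb : Fin N → ℝ) (hpa : pa ∈ stdSimplex ℝ (Fin N)) (hpb : pb ∈ stdSimplex ℝ (Fin N))
    (hmaxa : ∀ q ∈ stdSimplex ℝ (Fin N), q ⬝ᵥ a.mulVec q ≤ pa ⬝ᵥ a.mulVec pa)
    (hmaxb : ∀ q ∈ stdSimplex ℝ (Fin N), q ⬝ᵥ b.mulVec q ≤ pb ⬝ᵥ b.mulVec pb)
    (Eop : ℝ) (hEop0 : 0 ≤ Eop)
    (hE : ∀ x : Fin N → ℝ, en ((b - a).mulVec x) ≤ Eop * en x)
    (γ : ℝ)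
    (hγsup : ∀ u : Fin N → ℝ, ∑ i, u i = 0 → u ⬝ᵥ a.mulVec u ≤ -γ * ∑ i, (u i) ^ 2) :
    γ * en (pb - pa) ≤ 2 * Eop := by
  set u : Fin N → ℝ := pb - pa with hu
  have husum : ∑ i, u i = 0 := by
    simp only [hu, Pi.sub_apply, Finset.sum_sub_distrib, hpa.2, hpb.2, sub_self]
  have hpbeq : pb = pa + u := by funext i; simp [hu]
  have hA : 2 * (u ⬝ᵥ a.mulVec pa) + u ⬝ᵥ a.mulVec u ≤ 0 := by
    have h := hmaxa pb hpb
    rw [hpbeq, expand ha pa u] at h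
    linarith
  have hbu : u ⬝ᵥ b.mulVec u ≤ 0 := by
    by_cases h0 : u = 0
    · simp [h0]
    · exact (hSNTb u h0 husum).le
  have hv : 0 ≤ u ⬝ᵥ b.mulVec pb := by
    have key : -(2 * (u ⬝ᵥ b.mulVec pb)) ≤ 0 := by
      apply nonpos_of_le_mul (c := -(u ⬝ᵥ b.mulVec u)) (by linarith)
      intro t ht ht1
      have hq : pb + (-t) • u ∈ stdSimplex ℝ (Fin N) := by
        have heq : pb + (-t) • u = (1 - t) • pb + t • pa := by
          funext i; simp [hu, Pi.smul_apply, smul_eq_mul]; ring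
        rw [heq]
        exact (convex_stdSimplex ℝ (Fin N)) hpb hpa (by linarith) ht.le (by ring)
      have h := hmaxb _ hq
      rw [expand hb pb ((-t) • u)] at h
      have h1 : ((-t) • u) ⬝ᵥ b.mulVec pb = -t * (u ⬝ᵥ b.mulVec pb) := by
        rw [smul_dotProduct]; simp [smul_eq_mul]
      have h2 : ((-t) • u) ⬝ᵥ b.mulVec ((-t) • u) = t ^ 2 * (u ⬝ᵥ b.mulVec u) := by
        rw [mulVec_smul, smul_dotProduct, dotProduct_smul]
        simp [smul_eq_mul]; ring
      rw [h1, h2] at h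
      nlinarith
    linarith
  have hsplit : u ⬝ᵥ b.mulVec pb
      = u ⬝ᵥ a.mulVec pa + u ⬝ᵥ a.mulVec u + u ⬝ᵥ (b - a).mulVec pb := by
    have h1 : u ⬝ᵥ a.mulVec pb = u ⬝ᵥ a.mulVec pa + u ⬝ᵥ a.mulVec u := by
      nth_rewrite 1 [hpbeq]
      rw [mulVec_add, dotProduct_add]
    have h2 : u ⬝ᵥ (b - a).mulVec pb = u ⬝ᵥ b.mulVec pb - u ⬝ᵥ a.mulVec pb := by
      rw [sub_mulVec, dotProduct_sub]
    linarith
  have hkey : -(u ⬝ᵥ a.mulVec u) ≤ 2 * (u ⬝ᵥ (b - a).mulVec pb) := by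
    rw [hsplit] at hv
    linarith
  have hw : u ⬝ᵥ (b - a).mulVec pb ≤ Eop * en u := by
    calc u ⬝ᵥ (b - a).mulVec pb ≤ en u * en ((b - a).mulVec pb) := dot_le_en _ _
      _ ≤ en u * (Eop * en pb) := mul_le_mul_of_nonneg_left (hE pb) (en_nonneg u)
      _ ≤ en u * (Eop * 1) := by
          apply mul_le_mul_of_nonneg_left _ (en_nonneg u)
          exact mul_le_mul_of_nonneg_left (en_simplex hpb) hEop0
      _ = Eop * en u := by ring
  have hγu : γ * (en u) ^ 2 ≤ -(u ⬝ᵥ a.mulVec u) := by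
    have := hγsup u husum
    rw [sq_en]
    linarith
  by_cases h0 : en u = 0
  · rw [h0, mul_zero]; linarith
  · have hpos : 0 < en u := lt_of_le_of_ne (en_nonneg u) (Ne.symm h0)
    have : γ * (en u) ^ 2 ≤ 2 * Eop * en u := by
      calc γ * (en u) ^ 2 ≤ -(u ⬝ᵥ a.mulVec u) := hγu
        _ ≤ 2 * (u ⬝ᵥ (b - a).mulVec pb) := hkey
        _ ≤ 2 * (Eop * en u) := by linarith
        _ = 2 * Eop * en u := by ring
    nlinarith

end Stmt6Aux

open Stmt6Aux in
/-- Continuity of peel distributions: for strict negative type metrics `d, d'` on `[N]`,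
with `γ(e) = -max {xᵀex : ‖x‖₂ = 1, 1ᵀx = 0}` and maximizers `p, p'` of the quadratic form
over the simplex, `‖p' - p‖₂ ≤ (2 / max (γ d) (γ d')) ‖d' - d‖_op`. -/
theorem stmt6 {N : ℕ} (hN : 2 ≤ N) (d d' : Matrix (Fin N) (Fin N) ℝ)
    (hsymm : d.IsSymm) (hdiag : ∀ i, d i i = 0)
    (hpos : ∀ i j, i ≠ j → 0 < d i j)
    (htri : ∀ i j k, d i k ≤ d i j + d j k)
    (hSNT : ∀ x : Fin N → ℝ, x ≠ 0 → ∑ i, x i = 0 → x ⬝ᵥ d.mulVec x < 0)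
    (hsymm' : d'.IsSymm) (hdiag' : ∀ i, d' i i = 0)
    (hpos' : ∀ i j, i ≠ j → 0 < d' i j)
    (htri' : ∀ i j k, d' i k ≤ d' i j + d' j k)
    (hSNT' : ∀ x : Fin N → ℝ, x ≠ 0 → ∑ i, x i = 0 → x ⬝ᵥ d'.mulVec x < 0)
    (γd γd' : ℝ)
    (hγd : γd = -sSup {v : ℝ | ∃ x : Fin N → ℝ,
      ∑ i, (x i) ^ 2 = 1 ∧ ∑ i, x i = 0 ∧ v = x ⬝ᵥ d.mulVec x})
    (hγd' : γd' = -sSup {v : ℝ | ∃ x : Fin N → ℝ,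
      ∑ i, (x i) ^ 2 = 1 ∧ ∑ i, x i = 0 ∧ v = x ⬝ᵥ d'.mulVec x})
    (Eop : ℝ)
    (hEop : Eop = sSup {v : ℝ | ∃ x : Fin N → ℝ, ∑ i, (x i) ^ 2 = 1 ∧
      v = Real.sqrt (∑ i, ((d' - d).mulVec x i) ^ 2)})
    (p p' : Fin N → ℝ) (hp : p ∈ stdSimplex ℝ (Fin N)) (hp' : p' ∈ stdSimplex ℝ (Fin N))
    (hmax : ∀ q ∈ stdSimplex ℝ (Fin N), q ⬝ᵥ d.mulVec q ≤ p ⬝ᵥ d.mulVec p)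
    (hmax' : ∀ q ∈ stdSimplex ℝ (Fin N), q ⬝ᵥ d'.mulVec q ≤ p' ⬝ᵥ d'.mulVec p') :
    Real.sqrt (∑ i, (p' i - p i) ^ 2) ≤ 2 / max γd γd' * Eop := by
  obtain ⟨hgd1, hgd2⟩ := gamma_facts hN d hSNT
  obtain ⟨hgd1', hgd2'⟩ := gamma_facts hN d' hSNT'
  obtain ⟨hop0, hopb⟩ := op_facts hN (d' - d)
  rw [← hEop] at hop0 hopb
  have hγdpos : 0 < γd := by rw [hγd]; linarith
  have hγdpos' : 0 < γd' := by rw [hγd']; linarith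
  have hγsup_d : ∀ u : Fin N → ℝ, ∑ i, u i = 0 →
      u ⬝ᵥ d.mulVec u ≤ -γd * ∑ i, (u i) ^ 2 := by
    intro u hu
    rw [hγd, neg_neg]
    exact hgd2 u hu
  have hγsup_d' : ∀ u : Fin N → ℝ, ∑ i, u i = 0 →
      u ⬝ᵥ d'.mulVec u ≤ -γd' * ∑ i, (u i) ^ 2 := by
    intro u hu
    rw [hγd', neg_neg]
    exact hgd2' u hu
  have hE2 : ∀ x : Fin N → ℝ, en ((d - d').mulVec x) ≤ Eop * en x := by
    intro x
    have heq : (d - d').mulVec x = -((d' - d).mulVec x) := by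
      rw [← neg_mulVec, neg_sub]
    rw [heq, en_neg]
    exact hopb x
  have hm1 : γd * en (p' - p) ≤ 2 * Eop :=
    master d d' hsymm hsymm' hSNT' p p' hp hp' hmax hmax' Eop hop0 hopb γd hγsup_d
  have hm2 : γd' * en (p - p') ≤ 2 * Eop :=
    master d' d hsymm' hsymm hSNT p' p hp' hp hmax' hmax Eop hop0 hE2 γd' hγsup_d'
  have henn : en (p - p') = en (p' - p) := by
    rw [show p - p' = -(p' - p) by ring, en_neg]
  rw [henn] at hm2
  set m : ℝ := max γd γd' with hmdef
  have hmpos : 0 < m := lt_max_of_lt_left hγdpos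
  have hmle : m * en (p' - p) ≤ 2 * Eop := by
    rcases max_choice γd γd' with h | h <;> rw [hmdef, h]
    · exact hm1
    · exact hm2
  have hgoal : en (p' - p) ≤ 2 / m * Eop := by
    rw [div_mul_eq_mul_div, le_div_iff₀ hmpos, mul_comm (en (p' - p)) m]
    linarith
  have hen : Real.sqrt (∑ i, (p' i - p i) ^ 2) = en (p' - p) := by
    simp [en]
  rw [hen]
  exact hgoal
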